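/- Let ε > 0 and let φ be a real number with 0 ≤ φ < 1 − ε. Let c_1, …, c_k be any k distinct columns of the matrix A_n(φ). Then the Euclidean norm of the orthogonal projection of c_k onto the orthogonal complement of the span of c_1, …, c_{k−1} is at least (ε^n / √(n!))^k. -/

import Mathlib

open Finset

/-- Number of inversions of a permutation of `Fin n`. -/
def numInv {n : ℕ} (τ : Equiv.Perm (Fin n)) : ℕ :=
  (Finset.univ.filter fun p : Fin n × Fin n => p.1 < p.2 ∧ τ p.2 < τ p.1).card

/-- Kendall-Tau distance between two permutations of `Fin n`. -/
def dKT {n : ℕ} (π π' : Equiv.Perm (Fin n)) : ℕ :=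
  (Finset.univ.filter fun p : Fin n × Fin n =>
    p.1 < p.2 ∧ ¬((π p.1 < π p.2) ↔ (π' p.1 < π' p.2))).card

/-- The Mallows model probability of `σ`, with scaling parameter `φ` and center `c`. -/
noncomputable def mallows {n : ℕ} (φ : ℝ) (c : Equiv.Perm (Fin n)) (σ : Equiv.Perm (Fin n)) : ℝ :=
  φ ^ dKT c σ / ∑ τ : Equiv.Perm (Fin n), φ ^ dKT c τ

/-- Total variation distance. -/
noncomputable def dTV {n : ℕ} (P Q : Equiv.Perm (Fin n) → ℝ) : ℝ :=
  (∑ σ : Equiv.Perm (Fin n), |P σ - Q σ|) / 2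

/-- The column of the matrix `A_n(φ)` indexed by the permutation `σ`, viewed as a vector
in Euclidean space: its entry at row `π` is `φ ^ I(πσ⁻¹)`. -/
noncomputable def colA {n : ℕ} (φ : ℝ) (σ : Equiv.Perm (Fin n)) :
    EuclideanSpace ℝ (Equiv.Perm (Fin n)) :=
  WithLp.toLp 2 (fun π => φ ^ numInv (π * σ⁻¹))

/-! ### Auxiliary lemmas -/

lemma numInv_eq_sum {n : ℕ} (π τ : Equiv.Perm (Fin n)) :
    numInv (π * τ⁻¹) = ∑ p ∈ Finset.univ.filter (fun p : Fin n × Fin n => p.1 < p.2),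
      (if ((π p.1 < π p.2) ↔ (τ p.1 < τ p.2)) then 0 else 1) := by
  classical
  have h1 : ∑ p ∈ Finset.univ.filter (fun p : Fin n × Fin n => p.1 < p.2),
      (if ((π p.1 < π p.2) ↔ (τ p.1 < τ p.2)) then (0:ℕ) else 1)
      = (Finset.univ.filter fun p : Fin n × Fin n =>
          p.1 < p.2 ∧ ¬((π p.1 < π p.2) ↔ (τ p.1 < τ p.2))).card := by
    rw [← Finset.filter_filter, Finset.card_filter]
    exact Finset.sum_congr rfl fun p _ => by split_ifs with h1 h2 <;> simp_all
  rw [h1, numInv]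
  apply Finset.card_bij'
    (i := fun p (_ : p ∈ Finset.univ.filter fun p : Fin n × Fin n =>
        p.1 < p.2 ∧ (π * τ⁻¹) p.2 < (π * τ⁻¹) p.1) =>
      if τ⁻¹ p.1 < τ⁻¹ p.2 then (τ⁻¹ p.1, τ⁻¹ p.2) else (τ⁻¹ p.2, τ⁻¹ p.1))
    (j := fun q _ => if τ q.1 < τ q.2 then (τ q.1, τ q.2) else (τ q.2, τ q.1))
  · intro p hp
    simp only [Finset.mem_filter, Finset.mem_univ, true_and] at hp ⊢
    obtain ⟨hlt, hinv⟩ := hp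
    simp only [Equiv.Perm.mul_apply] at hinv
    have hne : τ⁻¹ p.1 ≠ τ⁻¹ p.2 := fun h => hlt.ne ((τ⁻¹).injective h)
    split_ifs with h
    · refine ⟨h, ?_⟩
      simp only [Equiv.Perm.inv_def, Equiv.apply_symm_apply]
      intro hiff
      exact absurd (hiff.mpr hlt) (not_lt.mpr hinv.le)
    · refine ⟨hne.lt_or_gt.resolve_left h, ?_⟩
      simp only [Equiv.Perm.inv_def, Equiv.apply_symm_apply]
      intro hiff
      exact absurd (hiff.mp hinv) (not_lt.mpr hlt.le)
  · intro q hq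
    simp only [Finset.mem_filter, Finset.mem_univ, true_and] at hq ⊢
    obtain ⟨hlt, hdis⟩ := hq
    have hneτ : τ q.1 ≠ τ q.2 := fun h => hlt.ne (τ.injective h)
    have hneπ : π q.1 ≠ π q.2 := fun h => hlt.ne (π.injective h)
    split_ifs with h
    · refine ⟨h, ?_⟩
      simp only [Equiv.Perm.mul_apply, Equiv.Perm.inv_def, Equiv.symm_apply_apply]
      exact hneπ.lt_or_gt.resolve_left fun hp => hdis (iff_of_true hp h)
    · refine ⟨hneτ.lt_or_gt.resolve_left h, ?_⟩
      simp only [Equiv.Perm.mul_apply, Equiv.Perm.inv_def, Equiv.symm_apply_apply]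
      by_contra hp
      exact hdis (iff_of_false (fun hp2 => hp (by exact hp2)) h)
  · intro p hp
    simp only [Finset.mem_filter, Finset.mem_univ, true_and] at hp
    obtain ⟨hlt, _⟩ := hp
    split_ifs with h <;>
      simp_all [Equiv.Perm.inv_def, Equiv.apply_symm_apply, not_lt.mpr hlt.le]
  · intro q hq
    simp only [Finset.mem_filter, Finset.mem_univ, true_and] at hq
    obtain ⟨hlt, _⟩ := hq
    split_ifs with h <;>
      simp_all [Equiv.Perm.inv_def, Equiv.symm_apply_apply, not_lt.mpr hlt.le]

lemma perm_eq_of_agree {n : ℕ} (π τ : Equiv.Perm (Fin n))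
    (h : ∀ a b : Fin n, a < b → ((π a < π b) ↔ (τ a < τ b))) : π = τ := by
  have h' : ∀ a b : Fin n, π a < π b ↔ τ a < τ b := by
    intro a b
    rcases lt_trichotomy a b with hab | rfl | hab
    · exact h a b hab
    · simp
    · have h1 := h b a hab
      have hπ : π a ≠ π b := fun e => hab.ne (π.injective e.symm)
      have hτ : τ a ≠ τ b := fun e => hab.ne (τ.injective e.symm)
      constructor
      · intro hp
        refine hτ.lt_or_gt.resolve_right fun ht => ?_
        exact absurd (h1.mpr ht) (not_lt.mpr hp.le)
      · intro ht
        refine hπ.lt_or_gt.resolve_right fun hp => ?_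
        exact absurd (h1.mp hp) (not_lt.mpr ht.le)
  have hmono : StrictMono (fun x => τ (π.symm x)) := by
    intro x y hxy
    have : π (π.symm x) < π (π.symm y) := by simpa using hxy
    exact (h' _ _).mp this
  have hrange : Set.range (fun x => τ (π.symm x)) = Set.range (id : Fin n → Fin n) := by
    rw [Set.range_id]
    exact (τ.surjective.comp π.symm.surjective).range_eq
  haveI : WellFoundedLT (Fin n) := inferInstance
  have hid : (fun x => τ (π.symm x)) = id :=
    (StrictMono.range_inj (β := Fin n) (γ := Fin n) hmono strictMono_id).mp hrange
  ext a
  have := congrFun hid (π a)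
  simp only [Equiv.symm_apply_apply, id_eq] at this
  rw [this]

lemma sep_exists {ι β : Type*} [DecidableEq ι] [DecidableEq β]
    (f : ι → β → Bool) (u : Finset ι) :
    ∀ t : Finset β, (∀ i ∈ t, ∀ j ∈ t, i ≠ j → ∃ p ∈ u, f p i ≠ f p j) →
    ∃ s : Finset ι, s ⊆ u ∧ s.card + 1 ≤ max t.card 1 ∧
      ∀ i ∈ t, ∀ j ∈ t, (∀ p ∈ s, f p i = f p j) → i = j := by
  intro t
  induction t using Finset.strongInduction with
  | _ t ih =>
    intro hsep
    by_cases hsmall : ∀ i ∈ t, ∀ j ∈ t, i = j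
    · exact ⟨∅, Finset.empty_subset _, by simp,
        fun i hi j hj _ => hsmall i hi j hj⟩
    · push_neg at hsmall
      obtain ⟨i, hi, j, hj, hij⟩ := hsmall
      obtain ⟨p, hpu, hp⟩ := hsep i hi j hj hij
      set t₁ := t.filter (fun x => f p x = f p i) with ht₁
      set t₂ := t.filter (fun x => ¬(f p x = f p i)) with ht₂
      have hit₁ : i ∈ t₁ := by simp [ht₁, hi]
      have hjt₂ : j ∈ t₂ := by
        simp only [ht₂, Finset.mem_filter]
        exact ⟨hj, fun h => hp h.symm⟩
      have hsub₁ : t₁ ⊂ t := by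
        refine Finset.ssubset_iff_of_subset (Finset.filter_subset _ _) |>.mpr ⟨j, hj, ?_⟩
        simp only [ht₁, Finset.mem_filter]
        exact fun h => hp (h.2.symm)
      have hsub₂ : t₂ ⊂ t := by
        refine Finset.ssubset_iff_of_subset (Finset.filter_subset _ _) |>.mpr ⟨i, hi, ?_⟩
        simp [ht₂]
      obtain ⟨s₁, hs₁u, hs₁c, hs₁⟩ := ih t₁ hsub₁ (fun a ha b hb hab =>
        hsep a (Finset.filter_subset _ _ ha) b (Finset.filter_subset _ _ hb) hab)
      obtain ⟨s₂, hs₂u, hs₂c, hs₂⟩ := ih t₂ hsub₂ (fun a ha b hb hab =>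
        hsep a (Finset.filter_subset _ _ ha) b (Finset.filter_subset _ _ hb) hab)
      refine ⟨insert p (s₁ ∪ s₂), ?_, ?_, ?_⟩
      · exact Finset.insert_subset hpu (Finset.union_subset hs₁u hs₂u)
      · have hc1 : t₁.card + t₂.card = t.card := Finset.card_filter_add_card_filter_not _
        have hc2 : 1 ≤ t₁.card := Finset.card_pos.mpr ⟨i, hit₁⟩
        have hc3 : 1 ≤ t₂.card := Finset.card_pos.mpr ⟨j, hjt₂⟩
        have hc4 : (insert p (s₁ ∪ s₂)).card ≤ (s₁ ∪ s₂).card + 1 := Finset.card_insert_le _ _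
        have hc5 : (s₁ ∪ s₂).card ≤ s₁.card + s₂.card := Finset.card_union_le _ _
        have hm1 : max t₁.card 1 = t₁.card := max_eq_left hc2
        have hm2 : max t₂.card 1 = t₂.card := max_eq_left hc3
        rw [hm1] at hs₁c; rw [hm2] at hs₂c
        have : 1 ≤ t.card := Finset.card_pos.mpr ⟨i, hi⟩
        rw [max_eq_left this]
        omega
      · intro a ha b hb hagree
        have hpab : f p a = f p b := hagree p (Finset.mem_insert_self _ _)
        have hag₁ : ∀ q ∈ s₁, f q a = f q b := fun q hq =>
          hagree q (Finset.mem_insert_of_mem (Finset.mem_union_left _ hq))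
        have hag₂ : ∀ q ∈ s₂, f q a = f q b := fun q hq =>
          hagree q (Finset.mem_insert_of_mem (Finset.mem_union_right _ hq))
        by_cases hcase : f p a = f p i
        · exact hs₁ a (by simp [ht₁, ha, hcase]) b (by simp [ht₁, hb, hpab ▸ hcase]) hag₁
        · exact hs₂ a (by simp [ht₂, ha, hcase]) b (by simp [ht₂, hb, hpab ▸ hcase]) hag₂

section Kernel
variable {ι β : Type*} [Fintype β]

lemma sq_expand {γ : Type*} [Fintype γ] [DecidableEq γ] (g : β → γ) (b : β → ℝ) :
    0 ≤ ∑ i, ∑ j, b i * b j * (if g i = g j then (1:ℝ) else 0) := by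
  have pt : ∀ i j : β, b i * b j * (if g i = g j then (1:ℝ) else 0)
      = ∑ v : γ, (if g i = v then b i else 0) * (if g j = v then b j else 0) := by
    intro i j
    have h1 : ∀ v : γ, (if g i = v then b i else 0) * (if g j = v then b j else 0)
        = if g j = v then ((if g i = v then b i else 0) * b j) else 0 := by
      intro v; by_cases h : g j = v <;> simp [h]
    rw [Finset.sum_congr rfl fun v _ => h1 v, Finset.sum_ite_eq]
    simp only [Finset.mem_univ, if_true]
    by_cases h : g i = g j <;> simp [h, mul_comm, mul_assoc, mul_left_comm]
  calc (0:ℝ) ≤ ∑ v : γ, (∑ i, if g i = v then b i else 0)^2 :=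
        Finset.sum_nonneg fun v _ => sq_nonneg _
    _ = ∑ v : γ, ∑ i, ∑ j, (if g i = v then b i else 0) * (if g j = v then b j else 0) := by
        refine Finset.sum_congr rfl fun v _ => ?_
        rw [sq, Finset.sum_mul_sum]
    _ = ∑ i, ∑ j, ∑ v : γ, (if g i = v then b i else 0) * (if g j = v then b j else 0) := by
        rw [Finset.sum_comm]
        exact Finset.sum_congr rfl fun i _ => Finset.sum_comm
    _ = ∑ i, ∑ j, b i * b j * (if g i = g j then (1:ℝ) else 0) :=
        Finset.sum_congr rfl fun i _ => Finset.sum_congr rfl fun j _ => (pt i j).symm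

lemma nonneg_form [Fintype ι] [DecidableEq ι] (f : ι → β → Bool) {φ : ℝ} (h0 : 0 ≤ φ) (h1 : φ ≤ 1)
    (t : Finset ι) : ∀ (s : Finset ι) (b : β → ℝ),
    0 ≤ ∑ i, ∑ j, b i * b j *
      ((if ∀ p ∈ s, f p i = f p j then (1:ℝ) else 0) *
        φ ^ ∑ p ∈ t, (if f p i = f p j then 0 else 1)) := by
  classical
  induction t using Finset.induction_on with
  | empty =>
    intro s b
    simp only [Finset.sum_empty, pow_zero, mul_one]
    have hexp := sq_expand (fun i => (fun p : {p // p ∈ s} => f p.1 i)) b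
    refine le_of_le_of_eq hexp (Finset.sum_congr rfl fun i _ =>
      Finset.sum_congr rfl fun j _ => ?_)
    congr 1
    have hiff : ((fun p : {p // p ∈ s} => f p.1 i) = fun p => f p.1 j)
        ↔ ∀ p ∈ s, f p i = f p j := by
      rw [funext_iff, Subtype.forall]
    exact if_congr hiff rfl rfl
  | @insert q t hq ihq =>
    intro s b
    have key : ∀ i j : β,
        b i * b j * ((if ∀ p ∈ s, f p i = f p j then (1:ℝ) else 0) *
          φ ^ ∑ p ∈ insert q t, (if f p i = f p j then 0 else 1))
        = φ * (b i * b j * ((if ∀ p ∈ s, f p i = f p j then (1:ℝ) else 0) *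
            φ ^ ∑ p ∈ t, (if f p i = f p j then 0 else 1)))
          + (1 - φ) * (b i * b j * ((if ∀ p ∈ insert q s, f p i = f p j then (1:ℝ) else 0) *
            φ ^ ∑ p ∈ t, (if f p i = f p j then 0 else 1))) := by
      intro i j
      rw [Finset.sum_insert hq, pow_add]
      by_cases hqij : f q i = f q j
      · simp only [Finset.forall_mem_insert, hqij, if_pos, pow_zero, one_mul, true_and]
        ring
      · simp only [Finset.forall_mem_insert, if_neg hqij, pow_one,
          false_and, if_false, hqij]
        ring
    calc (0:ℝ) ≤ φ * (∑ i, ∑ j, b i * b j * ((if ∀ p ∈ s, f p i = f p j then (1:ℝ) else 0) *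
            φ ^ ∑ p ∈ t, (if f p i = f p j then 0 else 1)))
          + (1 - φ) * (∑ i, ∑ j, b i * b j *
            ((if ∀ p ∈ insert q s, f p i = f p j then (1:ℝ) else 0) *
              φ ^ ∑ p ∈ t, (if f p i = f p j then 0 else 1))) :=
          add_nonneg (mul_nonneg h0 (ihq s b)) (mul_nonneg (by linarith) (ihq (insert q s) b))
      _ = ∑ i, ∑ j, b i * b j * ((if ∀ p ∈ s, f p i = f p j then (1:ℝ) else 0) *
            φ ^ ∑ p ∈ insert q t, (if f p i = f p j then 0 else 1)) := by
          rw [Finset.mul_sum, Finset.mul_sum, ← Finset.sum_add_distrib]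
          refine Finset.sum_congr rfl fun i _ => ?_
          rw [Finset.mul_sum, Finset.mul_sum, ← Finset.sum_add_distrib]
          exact Finset.sum_congr rfl fun j _ => (key i j).symm

lemma ker_bound [Fintype ι] [DecidableEq ι] (f : ι → β → Bool) {φ : ℝ} (h0 : 0 ≤ φ) (h1 : φ ≤ 1)
    (u : Finset ι) : ∀ s : Finset ι, s ⊆ u → ∀ b : β → ℝ,
    (1 - φ)^s.card * ∑ i, ∑ j, b i * b j *
        ((if ∀ p ∈ s, f p i = f p j then (1:ℝ) else 0) *
          φ ^ ∑ p ∈ u \ s, (if f p i = f p j then 0 else 1))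
      ≤ ∑ i, ∑ j, b i * b j * φ ^ ∑ p ∈ u, (if f p i = f p j then 0 else 1) := by
  classical
  intro s
  induction s using Finset.induction_on with
  | empty =>
    intro _ b
    rw [Finset.card_empty, pow_zero, one_mul, Finset.sdiff_empty]
    refine le_of_eq (Finset.sum_congr rfl fun i _ => Finset.sum_congr rfl fun j _ => ?_)
    simp
  | @insert q s hq ihs =>
    intro hsub b
    have hqu : q ∈ u := hsub (Finset.mem_insert_self q s)
    have hssub : s ⊆ u := fun x hx => hsub (Finset.mem_insert_of_mem hx)
    refine le_trans ?_ (ihs hssub b)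
    have hset : u \ s = insert q (u \ insert q s) := by
      ext x
      simp only [Finset.mem_sdiff, Finset.mem_insert, not_or]
      constructor
      · rintro ⟨hxu, hxs⟩
        by_cases hxq : x = q
        · exact Or.inl hxq
        · exact Or.inr ⟨hxu, hxq, hxs⟩
      · rintro (rfl | ⟨hxu, _, hxs⟩)
        · exact ⟨hqu, hq⟩
        · exact ⟨hxu, hxs⟩
    have hqnot : q ∉ u \ insert q s := by simp
    have key : ∀ i j : β,
        b i * b j * ((if ∀ p ∈ s, f p i = f p j then (1:ℝ) else 0) *
          φ ^ ∑ p ∈ u \ s, (if f p i = f p j then 0 else 1))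
        = φ * (b i * b j * ((if ∀ p ∈ s, f p i = f p j then (1:ℝ) else 0) *
            φ ^ ∑ p ∈ u \ insert q s, (if f p i = f p j then 0 else 1)))
          + (1 - φ) * (b i * b j * ((if ∀ p ∈ insert q s, f p i = f p j then (1:ℝ) else 0) *
            φ ^ ∑ p ∈ u \ insert q s, (if f p i = f p j then 0 else 1))) := by
      intro i j
      rw [hset, Finset.sum_insert hqnot, pow_add]
      by_cases hqij : f q i = f q j
      · simp only [Finset.forall_mem_insert, hqij, if_pos, pow_zero, one_mul, true_and]
        ring
      · simp only [Finset.forall_mem_insert, if_neg hqij, pow_one, false_and, if_false, hqij]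
        ring
    have hsplit : ∑ i, ∑ j, b i * b j * ((if ∀ p ∈ s, f p i = f p j then (1:ℝ) else 0) *
          φ ^ ∑ p ∈ u \ s, (if f p i = f p j then 0 else 1))
        = φ * (∑ i, ∑ j, b i * b j * ((if ∀ p ∈ s, f p i = f p j then (1:ℝ) else 0) *
            φ ^ ∑ p ∈ u \ insert q s, (if f p i = f p j then 0 else 1)))
          + (1 - φ) * (∑ i, ∑ j, b i * b j *
            ((if ∀ p ∈ insert q s, f p i = f p j then (1:ℝ) else 0) *
              φ ^ ∑ p ∈ u \ insert q s, (if f p i = f p j then 0 else 1))) := by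
      rw [Finset.mul_sum, Finset.mul_sum, ← Finset.sum_add_distrib]
      refine Finset.sum_congr rfl fun i _ => ?_
      rw [Finset.mul_sum, Finset.mul_sum, ← Finset.sum_add_distrib]
      exact Finset.sum_congr rfl fun j _ => key i j
    rw [hsplit, Finset.card_insert_of_notMem hq, pow_succ]
    have hS0 : 0 ≤ ∑ i, ∑ j, b i * b j * ((if ∀ p ∈ s, f p i = f p j then (1:ℝ) else 0) *
        φ ^ ∑ p ∈ u \ insert q s, (if f p i = f p j then 0 else 1)) :=
      nonneg_form f h0 h1 (u \ insert q s) s b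
    have h1φ : (0:ℝ) ≤ 1 - φ := by linarith
    have hpow : (0:ℝ) ≤ (1 - φ)^s.card := pow_nonneg h1φ _
    rw [mul_assoc]
    apply mul_le_mul_of_nonneg_left _ hpow
    nlinarith [hS0]

end Kernel

lemma bsplit {k : ℕ} (i₀ : Fin k) (a : {i : Fin k // i ≠ i₀} → ℝ) (g : Fin k → ℝ) :
    ∑ i, (if h : i = i₀ then (1:ℝ) else -(a ⟨i, h⟩)) * g i
      = g i₀ - ∑ i : {i : Fin k // i ≠ i₀}, a i * g i := by
  classical
  rw [← Finset.add_sum_erase Finset.univ _ (Finset.mem_univ i₀)]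
  rw [dif_pos rfl, one_mul]
  have h1 : ∑ i ∈ Finset.univ.erase i₀, (if h : i = i₀ then (1:ℝ) else -(a ⟨i, h⟩)) * g i
      = ∑ i : {i : Fin k // i ≠ i₀}, -(a i) * g i := by
    rw [Finset.sum_subtype (p := fun i => i ≠ i₀) (Finset.univ.erase i₀)
      (fun x => by simp [Finset.mem_erase]) (fun i => (if h : i = i₀ then (1:ℝ) else -(a ⟨i, h⟩)) * g i)]
    refine Finset.sum_congr rfl fun i _ => ?_
    rw [dif_neg i.2]
  rw [h1]
  rw [show ∑ i : {i : Fin k // i ≠ i₀}, -(a i) * g i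
      = -∑ i : {i : Fin k // i ≠ i₀}, a i * g i by
    rw [← Finset.sum_neg_distrib]; exact Finset.sum_congr rfl fun i _ => by ring]
  ring

theorem projection_lower_bound (n k : ℕ) (ε φ : ℝ) (hε : 0 < ε) (hφ0 : 0 ≤ φ)
    (hφ : φ < 1 - ε) (σ : Fin k → Equiv.Perm (Fin n)) (hσ : Function.Injective σ)
    (i₀ : Fin k) :
    (ε ^ n / Real.sqrt (n.factorial)) ^ k ≤
      ‖(Submodule.orthogonalProjectionOnto
          ((Submodule.span ℝ
            (Set.range fun i : {i : Fin k // i ≠ i₀} => colA φ (σ i)))ᗮ))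
        (colA φ (σ i₀))‖ := by
  have hφ1 : φ ≤ 1 := by linarith
  have hε1 : ε < 1 := by linarith
  -- the feature family: pairwise comparisons
  set u : Finset (Fin n × Fin n) :=
    Finset.univ.filter (fun p : Fin n × Fin n => p.1 < p.2) with hu
  set f : (Fin n × Fin n) → Fin k → Bool :=
    (fun p i => decide (σ i p.1 < σ i p.2)) with hf
  -- separation
  have hsep : ∀ i ∈ (Finset.univ : Finset (Fin k)), ∀ j ∈ (Finset.univ : Finset (Fin k)),
      i ≠ j → ∃ p ∈ u, f p i ≠ f p j := by
    intro i _ j _ hij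
    by_contra hcon
    push_neg at hcon
    refine hij (hσ (perm_eq_of_agree _ _ fun a b hab => ?_))
    have h1 := hcon (a, b) (by simp [hu, hab])
    simpa [hf, decide_eq_decide] using h1
  obtain ⟨s, hsu, hscard, hssep⟩ := sep_exists f u Finset.univ hsep
  -- the inversion number as a sum of feature disagreements
  have hform : ∀ i j : Fin k, numInv (σ j * (σ i)⁻¹)
      = ∑ p ∈ u, (if f p i = f p j then 0 else 1) := by
    intro i j
    rw [numInv_eq_sum, hu]
    refine Finset.sum_congr rfl fun p _ => ?_
    refine if_congr ?_ rfl rfl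
    rw [hf]
    rw [decide_eq_decide]
    exact iff_comm
  -- set up the projection
  set W := Submodule.span ℝ
    (Set.range fun i : {i : Fin k // i ≠ i₀} => colA φ (σ i)) with hW
  set v := colA φ (σ i₀) with hv
  rw [Submodule.coe_norm, ← Submodule.starProjection_apply, Submodule.starProjection_orthogonal_val]
  set w : EuclideanSpace ℝ (Equiv.Perm (Fin n)) := W.starProjection v with hw
  have hwW : w ∈ W := Submodule.starProjection_apply_mem _ _
  rw [hW] at hwW
  obtain ⟨a, ha⟩ := (Submodule.mem_span_range_iff_exists_fun ℝ).mp hwW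
  set b : Fin k → ℝ := fun i => if h : i = i₀ then (1:ℝ) else -(a ⟨i, h⟩) with hb
  have hbi₀ : b i₀ = 1 := by rw [hb]; simp
  set y : EuclideanSpace ℝ (Equiv.Perm (Fin n)) :=
    WithLp.toLp 2 (fun π => ∑ j : Fin k, if σ j = π then b j else 0) with hy
  -- inner products against y
  have hinner : ∀ x : EuclideanSpace ℝ (Equiv.Perm (Fin n)),
      inner ℝ x y = ∑ j : Fin k, x (σ j) * b j := by
    intro x
    rw [PiLp.inner_apply]
    simp only [RCLike.inner_apply, conj_trivial]
    have h1 : ∀ π : Equiv.Perm (Fin n), x π * y π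
        = ∑ j : Fin k, (if σ j = π then x π * b j else 0) := by
      intro π
      rw [hy]
      rw [Finset.mul_sum]
      exact Finset.sum_congr rfl fun j _ => by
        by_cases h : σ j = π <;> simp [h]
    rw [Finset.sum_congr rfl fun π _ => (mul_comm _ _).trans (h1 π), Finset.sum_comm]
    refine Finset.sum_congr rfl fun j _ => ?_
    rw [Finset.sum_ite_eq]
    simp
  have hyy : (inner ℝ y y : ℝ) = ∑ j : Fin k, b j ^ 2 := by
    rw [hinner y]
    refine Finset.sum_congr rfl fun j _ => ?_
    have h2 : y (σ j) = b j := by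
      rw [hy]
      calc ∑ j' : Fin k, (if σ j' = σ j then b j' else 0)
          = ∑ j' : Fin k, (if j' = j then b j' else 0) :=
            Finset.sum_congr rfl fun j' _ =>
              if_congr ⟨fun h => hσ h, fun h => by rw [h]⟩ rfl rfl
        _ = b j := by rw [Finset.sum_ite_eq' Finset.univ j b]; simp
    rw [h2, sq]
  have hJ : ∀ i : Fin k, (inner ℝ (colA φ (σ i)) y : ℝ)
      = ∑ j : Fin k, φ ^ (numInv (σ j * (σ i)⁻¹)) * b j := by
    intro i
    rw [hinner]
    rfl
  -- the quadratic form
  have hQ : (inner ℝ (v - w) y : ℝ) = ∑ i : Fin k, ∑ j : Fin k,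
      b i * b j * φ ^ ∑ p ∈ u, (if f p i = f p j then 0 else 1) := by
    have hQ1 : (inner ℝ (v - w) y : ℝ) = ∑ i : Fin k, b i * (inner ℝ (colA φ (σ i)) y : ℝ) := by
      rw [inner_sub_left, ← ha, sum_inner]
      simp only [real_inner_smul_left]
      rw [hb]
      rw [bsplit i₀ a (fun i => (inner ℝ (colA φ (σ i)) y : ℝ))]
    rw [hQ1]
    refine Finset.sum_congr rfl fun i _ => ?_
    rw [hJ i, Finset.mul_sum]
    refine Finset.sum_congr rfl fun j _ => ?_
    rw [hform i j]
    ring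
  -- kernel bound
  have hKB := ker_bound f hφ0 hφ1 u s hsu b
  have hdiag : ∑ i : Fin k, ∑ j : Fin k, b i * b j *
      ((if ∀ p ∈ s, f p i = f p j then (1:ℝ) else 0) *
        φ ^ ∑ p ∈ u \ s, (if f p i = f p j then 0 else 1))
      = ∑ i : Fin k, b i ^ 2 := by
    refine Finset.sum_congr rfl fun i _ => ?_
    rw [Finset.sum_eq_single i]
    · have h1 : (if ∀ p ∈ s, f p i = f p i then (1:ℝ) else 0) = 1 := if_pos (fun p _ => rfl)
      have h2 : ∑ p ∈ u \ s, (if f p i = f p i then (0:ℕ) else 1) = 0 :=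
        Finset.sum_eq_zero fun p _ => if_pos rfl
      rw [h1, h2, pow_zero, sq]
      ring
    · intro j _ hji
      have h3 : ¬ ∀ p ∈ s, f p i = f p j := fun hall =>
        hji (hssep i (Finset.mem_univ i) j (Finset.mem_univ j) hall).symm
      rw [if_neg h3]
      ring
    · intro h; exact absurd (Finset.mem_univ i) h
  have hKB2 : (1 - φ) ^ s.card * (∑ i : Fin k, b i ^ 2)
      ≤ ∑ i : Fin k, ∑ j : Fin k, b i * b j * φ ^ ∑ p ∈ u, (if f p i = f p j then 0 else 1) := by
    rw [← hdiag]
    exact hKB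
  set B : ℝ := ∑ j : Fin k, b j ^ 2 with hB
  have hB1 : (1:ℝ) ≤ B := by
    have h4 : b i₀ ^ 2 ≤ B := by
      simpa using Finset.single_le_sum (f := fun j => b j ^ 2)
        (fun j _ => sq_nonneg (b j)) (Finset.mem_univ i₀)
    rw [hbi₀] at h4
    simpa using h4
  have hBnn : (0:ℝ) ≤ B := le_trans zero_le_one hB1
  have hsB : (1:ℝ) ≤ Real.sqrt B := by
    rw [show (1:ℝ) = Real.sqrt 1 by simp]
    exact Real.sqrt_le_sqrt hB1
  have hynorm : ‖y‖ = Real.sqrt B := by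
    rw [norm_eq_sqrt_real_inner, hyy]
  have hCS : (inner ℝ (v - w) y : ℝ) ≤ ‖v - w‖ * Real.sqrt B := by
    rw [← hynorm]
    exact real_inner_le_norm _ _
  have hc0 : (0:ℝ) ≤ (1 - φ)^s.card := pow_nonneg (by linarith) _
  have hmain : (1 - φ)^s.card * Real.sqrt B ≤ ‖v - w‖ := by
    have h₁ : (1 - φ)^s.card * B ≤ ‖v - w‖ * Real.sqrt B := by
      calc (1 - φ)^s.card * B ≤ (inner ℝ (v - w) y : ℝ) := by rw [hQ, hB]; exact hKB2
        _ ≤ ‖v - w‖ * Real.sqrt B := hCS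
    have hsqB : Real.sqrt B * Real.sqrt B = B := Real.mul_self_sqrt hBnn
    have hpos : (0:ℝ) < Real.sqrt B := lt_of_lt_of_le one_pos hsB
    nlinarith [h₁, hsqB, hpos]
  -- the count bound
  have hk1 : 1 ≤ k := i₀.pos
  have hmk : s.card + 1 ≤ k := by
    rw [Finset.card_univ, Fintype.card_fin] at hscard
    omega
  have hn0 : n = 0 → k ≤ 1 := by
    intro hn
    by_contra hk
    push_neg at hk
    have he : σ ⟨0, by omega⟩ = σ ⟨1, by omega⟩ := by
      subst hn
      exact Equiv.ext fun x => x.elim0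
    have := hσ he
    simp [Fin.ext_iff] at this
  have hmnk : s.card ≤ n * k := by
    rcases Nat.eq_zero_or_pos n with hn | hn
    · have := hn0 hn
      omega
    · have : k ≤ n * k := Nat.le_mul_of_pos_left k hn
      omega
  -- final numeric chain
  have hT : (ε ^ n / Real.sqrt (n.factorial)) ^ k ≤ (1 - φ)^s.card := by
    have h1 : (0:ℝ) ≤ ε ^ n / Real.sqrt n.factorial :=
      div_nonneg (pow_nonneg hε.le _) (Real.sqrt_nonneg _)
    have hfac1 : (1:ℝ) ≤ Real.sqrt n.factorial := by
      rw [show (1:ℝ) = Real.sqrt 1 by simp]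
      exact Real.sqrt_le_sqrt (by exact_mod_cast n.factorial_pos)
    have h2 : ε ^ n / Real.sqrt n.factorial ≤ ε ^ n :=
      div_le_self (pow_nonneg hε.le n) hfac1
    calc (ε ^ n / Real.sqrt (n.factorial)) ^ k ≤ (ε ^ n) ^ k := pow_le_pow_left₀ h1 h2 k
      _ = ε ^ (n * k) := by rw [← pow_mul]
      _ ≤ ε ^ s.card := pow_le_pow_of_le_one hε.le hε1.le hmnk
      _ ≤ (1 - φ) ^ s.card := pow_le_pow_left₀ hε.le (by linarith) s.card
  calc (ε ^ n / Real.sqrt (n.factorial)) ^ k ≤ (1 - φ)^s.card := hT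
    _ ≤ (1 - φ)^s.card * Real.sqrt B := le_mul_of_one_le_right hc0 hsB
    _ ≤ ‖v - w‖ := hmain
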